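/- For the vertical variation φ(t) = v sin t with v ∈ ℝ^n satisfying Σ m_i v_i = 0 and Σ m_i = 1, and a planar rotating central-configuration path x(t) = e^{ikt} x̄ with constant mutual distances, the second variation of the action equals π [ Σ_{i<j} m_i m_j (v_i − v_j)² − α Σ_{i<j} (m_i m_j/|x̄_i − x̄_j|^{α+2})(v_i − v_j)² ]. In particular, if Σ_{i<j} m_i m_j (v_i − v_j)² (1 − α |x̄_i − x̄_j|^{−(α+2)}) < 0 then x is not a local minimizer. -/

import Mathlib

open Finset

/-- For the vertical variation `φ(t) = v sin t` (with `Σ m_i v_i = 0`, `Σ m_i = 1`) along a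
planar rotating path `x(t) = e^{ikt} x̄` with constant mutual distances, the second
variation equals `π [Σ_{i<j} m_i m_j (v_i−v_j)² − α Σ_{i<j} (m_i m_j/|x̄_i−x̄_j|^{α+2})(v_i−v_j)²]`;
in particular if `Σ_{i<j} m_i m_j (v_i−v_j)²(1 − α|x̄_i−x̄_j|^{−(α+2)}) < 0` the second
variation is negative (so `x` is not a minimizer). -/
theorem second_variation_sin_vertical
    (n : ℕ) (m v : Fin n → ℝ) (α : ℝ) (k : ℤ)
    (xbar : Fin n → ℂ)
    (hm : ∀ i, 0 < m i) (hmsum : ∑ i, m i = 1) (hα : 0 < α)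
    (hv : ∑ i, m i * v i = 0)
    (hcoll : ∀ i j, i ≠ j → xbar i ≠ xbar j)
    (x : ℝ → Fin n → ℂ)
    (hx : ∀ t i, x t i = Complex.exp (Complex.I * (k : ℂ) * (t : ℂ)) * xbar i) :
    ((∫ t in (0:ℝ)..(2 * Real.pi),
        ((∑ i, ∑ j ∈ Finset.univ.filter (fun j => i < j),
            m i * m j * ((v i - v j) * Real.cos t) ^ 2)
          - α * ∑ i, ∑ j ∈ Finset.univ.filter (fun j => i < j),
              m i * m j / ‖x t i - x t j‖ ^ (α + 2) * ((v i - v j) * Real.sin t) ^ 2))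
      = Real.pi * ((∑ i, ∑ j ∈ Finset.univ.filter (fun j => i < j),
            m i * m j * (v i - v j) ^ 2)
          - α * ∑ i, ∑ j ∈ Finset.univ.filter (fun j => i < j),
              m i * m j / ‖xbar i - xbar j‖ ^ (α + 2) * (v i - v j) ^ 2))
    ∧ ((∑ i, ∑ j ∈ Finset.univ.filter (fun j => i < j),
          m i * m j * (v i - v j) ^ 2 * (1 - α / ‖xbar i - xbar j‖ ^ (α + 2))) < 0 →
        (∫ t in (0:ℝ)..(2 * Real.pi),
          ((∑ i, ∑ j ∈ Finset.univ.filter (fun j => i < j),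
              m i * m j * ((v i - v j) * Real.cos t) ^ 2)
            - α * ∑ i, ∑ j ∈ Finset.univ.filter (fun j => i < j),
                m i * m j / ‖x t i - x t j‖ ^ (α + 2) * ((v i - v j) * Real.sin t) ^ 2)) < 0) := by
  have hnorm : ∀ (t : ℝ) i j, ‖x t i - x t j‖ = ‖xbar i - xbar j‖ := by
    intro t i j
    rw [hx, hx, ← mul_sub, norm_mul]
    have : ‖Complex.exp (Complex.I * (k : ℂ) * (t : ℂ))‖ = 1 := by
      rw [Complex.norm_exp]
      simp [mul_comm, Complex.mul_re, Complex.mul_im]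
    rw [this, one_mul]
  set A : ℝ := ∑ i, ∑ j ∈ Finset.univ.filter (fun j => i < j),
      m i * m j * (v i - v j) ^ 2 with hA
  set C : ℝ := ∑ i, ∑ j ∈ Finset.univ.filter (fun j => i < j),
      m i * m j / ‖xbar i - xbar j‖ ^ (α + 2) * (v i - v j) ^ 2 with hC
  have hint : ∀ t : ℝ,
      ((∑ i, ∑ j ∈ Finset.univ.filter (fun j => i < j),
          m i * m j * ((v i - v j) * Real.cos t) ^ 2)
        - α * ∑ i, ∑ j ∈ Finset.univ.filter (fun j => i < j),
            m i * m j / ‖x t i - x t j‖ ^ (α + 2) * ((v i - v j) * Real.sin t) ^ 2)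
      = A * Real.cos t ^ 2 - α * C * Real.sin t ^ 2 := by
    intro t
    have h1 : (∑ i, ∑ j ∈ Finset.univ.filter (fun j => i < j),
        m i * m j * ((v i - v j) * Real.cos t) ^ 2) = A * Real.cos t ^ 2 := by
      rw [hA, Finset.sum_mul]
      refine Finset.sum_congr rfl fun i _ => ?_
      rw [Finset.sum_mul]
      exact Finset.sum_congr rfl fun j _ => by ring
    have h2 : (∑ i, ∑ j ∈ Finset.univ.filter (fun j => i < j),
        m i * m j / ‖x t i - x t j‖ ^ (α + 2) * ((v i - v j) * Real.sin t) ^ 2)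
        = C * Real.sin t ^ 2 := by
      rw [hC, Finset.sum_mul]
      refine Finset.sum_congr rfl fun i _ => ?_
      rw [Finset.sum_mul]
      refine Finset.sum_congr rfl fun j _ => ?_
      rw [hnorm]; ring
    rw [h1, h2, mul_assoc]
  have hmain : (∫ t in (0:ℝ)..(2 * Real.pi),
      ((∑ i, ∑ j ∈ Finset.univ.filter (fun j => i < j),
          m i * m j * ((v i - v j) * Real.cos t) ^ 2)
        - α * ∑ i, ∑ j ∈ Finset.univ.filter (fun j => i < j),
            m i * m j / ‖x t i - x t j‖ ^ (α + 2) * ((v i - v j) * Real.sin t) ^ 2))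
      = Real.pi * (A - α * C) := by
    rw [intervalIntegral.integral_congr (fun t _ => hint t)]
    have hi1 : IntervalIntegrable (fun t => A * Real.cos t ^ 2) MeasureTheory.volume 0 (2 * Real.pi) :=
      (Continuous.intervalIntegrable (by continuity) _ _)
    have hi2 : IntervalIntegrable (fun t => α * C * Real.sin t ^ 2) MeasureTheory.volume 0 (2 * Real.pi) :=
      (Continuous.intervalIntegrable (by continuity) _ _)
    rw [intervalIntegral.integral_sub hi1 hi2, intervalIntegral.integral_const_mul,
      intervalIntegral.integral_const_mul, integral_cos_sq, integral_sin_sq]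
    simp [Real.sin_two_pi, Real.cos_two_pi]
    ring
  refine ⟨hmain, fun hneg => ?_⟩
  rw [hmain]
  have hAC : A - α * C = ∑ i, ∑ j ∈ Finset.univ.filter (fun j => i < j),
      m i * m j * (v i - v j) ^ 2 * (1 - α / ‖xbar i - xbar j‖ ^ (α + 2)) := by
    rw [hA, hC, Finset.mul_sum, ← Finset.sum_sub_distrib]
    refine Finset.sum_congr rfl fun i _ => ?_
    rw [Finset.mul_sum, ← Finset.sum_sub_distrib]
    exact Finset.sum_congr rfl fun j _ => by ring
  rw [hAC]
  exact mul_neg_of_pos_of_neg Real.pi_pos hneg
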